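/- Let Λ ⊆ ℝ and let (μ_λ)_{λ∈Λ} be a family of probability distributions on ℝ that is stochastically increasing in λ (i.e., λ ≤ λ′ implies μ_λ ≤_st μ_{λ′}). Let ψ: ℝ^n → ℝ be a bounded measurable supermodular function, and define g(λ_1, …, λ_n) = ∫ ψ d(μ_{λ_1} ⊗ μ_{λ_2} ⊗ ⋯ ⊗ μ_{λ_n}), i.e., g(λ_1,…,λ_n) = E[ψ(X_{1,λ_1}, …, X_{n,λ_n})] where X_{1,λ_1}, …, X_{n,λ_n} are independent with X_{i,λ_i} ~ μ_{λ_i}. Then g is supermodular on Λ^n. -/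
import Mathlib
open MeasureTheory

noncomputable section

private lemma bdd_integrable {α : Type*} [MeasurableSpace α] {P : Measure α}
    [IsProbabilityMeasure P] {f : α → ℝ} (hf : AEStronglyMeasurable f P) {C : ℝ}
    (hb : ∀ x, |f x| ≤ C) : Integrable f P :=
  (integrable_const C).mono' hf
    (ae_of_all _ fun x => by simpa [Real.norm_eq_abs] using hb x)

private lemma bdd_integral_abs {α : Type*} [MeasurableSpace α] {P : Measure α}
    [IsProbabilityMeasure P] {f : α → ℝ} {C : ℝ}
    (hb : ∀ x, |f x| ≤ C) : |∫ x, f x ∂P| ≤ C := by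
  have h := norm_integral_le_of_norm_le_const (μ := P) (f := f) (C := C)
    (ae_of_all _ fun x => by simpa [Real.norm_eq_abs] using hb x)
  simpa [Real.norm_eq_abs, measure_univ] using h

private lemma insertNth_mono {k : ℕ} (i : Fin (k + 1)) {y y' : ℝ} {z z' : Fin k → ℝ}
    (hy : y ≤ y') (hz : z ≤ z') :
    (i.insertNth y z : Fin (k + 1) → ℝ) ≤ i.insertNth y' z' := by
  rw [Fin.insertNth_le_iff]
  refine ⟨by simpa using hy, fun j => by simpa using hz j⟩

private lemma pi_st : ∀ (m : ℕ) (κ ν : Fin m → Measure ℝ),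
    (∀ j, IsProbabilityMeasure (κ j)) → (∀ j, IsProbabilityMeasure (ν j)) →
    (∀ j, ∀ φ : ℝ → ℝ, Monotone φ → (∃ C, ∀ x, |φ x| ≤ C) →
        ∫ x, φ x ∂(κ j) ≤ ∫ x, φ x ∂(ν j)) →
    ∀ (h : (Fin m → ℝ) → ℝ) (C : ℝ), Measurable h → (∀ x, |h x| ≤ C) → Monotone h →
      ∫ x, h x ∂(Measure.pi κ) ≤ ∫ x, h x ∂(Measure.pi ν) := by
  intro m
  induction m with
  | zero =>
      intro κ ν _ _ _ h C hm hb hmono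
      rw [Measure.pi_of_empty, Measure.pi_of_empty]
  | succ k ih =>
      intro κ ν hκ hν hdom h C hm hb hmono
      haveI : ∀ j, IsProbabilityMeasure (κ j) := hκ
      haveI : ∀ j, IsProbabilityMeasure (ν j) := hν
      set e := MeasurableEquiv.piFinSuccAbove (fun _ : Fin (k + 1) => ℝ) 0 with he
      haveI : ∀ j, IsProbabilityMeasure (κ ((0 : Fin (k+1)).succAbove j)) := fun j => hκ _
      haveI : ∀ j, IsProbabilityMeasure (ν ((0 : Fin (k+1)).succAbove j)) := fun j => hν _
      set πκ := Measure.pi (fun j => κ ((0 : Fin (k+1)).succAbove j)) with hπκ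
      set πν := Measure.pi (fun j => ν ((0 : Fin (k+1)).succAbove j)) with hπν
      haveI : IsProbabilityMeasure πκ := by rw [hπκ]; infer_instance
      haveI : IsProbabilityMeasure πν := by rw [hπν]; infer_instance
      have hesymm : ∀ (p : ℝ × (Fin k → ℝ)), e.symm p = (0 : Fin (k+1)).insertNth p.1 p.2 := by
        intro p
        simp [he, MeasurableEquiv.piFinSuccAbove_symm_apply, Fin.insertNthEquiv]
      have hmf : Measurable fun p : ℝ × (Fin k → ℝ) => h (e.symm p) :=
        hm.comp e.symm.measurable
      have hbf : ∀ p : ℝ × (Fin k → ℝ), |h (e.symm p)| ≤ C := fun p => hb _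
      -- rewrite both sides as iterated integrals
      have hrw : ∀ (ρ : Fin (k+1) → Measure ℝ), (∀ j, IsProbabilityMeasure (ρ j)) →
          ∫ x, h x ∂(Measure.pi ρ)
            = ∫ y, ∫ z, h (e.symm (y, z))
                ∂(Measure.pi fun j => ρ ((0 : Fin (k+1)).succAbove j)) ∂(ρ 0) := by
        intro ρ hρ
        haveI : ∀ j, IsProbabilityMeasure (ρ j) := hρ
        haveI : ∀ j, IsProbabilityMeasure (ρ ((0 : Fin (k+1)).succAbove j)) := fun j => hρ _
        have hmp := measurePreserving_piFinSuccAbove ρ 0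
        have h1 : ∫ x, h x ∂(Measure.pi ρ)
            = ∫ p, h (e.symm p)
                ∂((ρ 0).prod (Measure.pi fun j => ρ ((0 : Fin (k+1)).succAbove j))) :=
          ((hmp.symm e).integral_comp e.symm.measurableEmbedding h).symm
        rw [h1, MeasureTheory.integral_prod]
        exact bdd_integrable hmf.aestronglyMeasurable hbf
      rw [hrw κ hκ, hrw ν hν]
      set A : ℝ → ℝ := fun y => ∫ z, h (e.symm (y, z)) ∂πκ with hA
      set B : ℝ → ℝ := fun y => ∫ z, h (e.symm (y, z)) ∂πν with hB
      have hmins : ∀ y : ℝ, Measurable fun z : Fin k → ℝ => h (e.symm (y, z)) :=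
        fun y => hmf.comp measurable_prodMk_left
      have hAB : ∀ y, A y ≤ B y := by
        intro y
        refine ih _ _ (fun j => hκ _) (fun j => hν _) (fun j φ hφ hbφ => hdom _ φ hφ hbφ)
          _ C (hmins y) (fun z => hb _) ?_
        intro z z' hzz
        simp only [hesymm]
        exact hmono (insertNth_mono 0 le_rfl hzz)
      have hBmono : Monotone B := by
        intro y y' hyy
        refine integral_mono (bdd_integrable ((hmins y).aestronglyMeasurable) fun z => hb _)
          (bdd_integrable ((hmins y').aestronglyMeasurable) fun z => hb _) ?_
        intro z
        simp only [hesymm]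
        exact hmono (insertNth_mono 0 hyy le_rfl)
      have hBbdd : ∀ y, |B y| ≤ C := fun y => bdd_integral_abs fun z => hb _
      have hAbdd : ∀ y, |A y| ≤ C := fun y => bdd_integral_abs fun z => hb _
      have hAmeas : AEStronglyMeasurable A (κ 0) :=
        (hmf.stronglyMeasurable.integral_prod_right' (ν := πκ)).aestronglyMeasurable
      have hBmeasκ : AEStronglyMeasurable B (κ 0) :=
        (hmf.stronglyMeasurable.integral_prod_right' (ν := πν)).aestronglyMeasurable
      calc ∫ y, A y ∂(κ 0) ≤ ∫ y, B y ∂(κ 0) :=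
            integral_mono (bdd_integrable hAmeas hAbdd) (bdd_integrable hBmeasκ hBbdd) hAB
        _ ≤ ∫ y, B y ∂(ν 0) := hdom 0 B hBmono ⟨C, hBbdd⟩

private lemma swap_step {n : ℕ} (Λ : Set ℝ) (μ : ℝ → Measure ℝ)
    (hprob : ∀ l ∈ Λ, IsProbabilityMeasure (μ l))
    (hsi : ∀ l ∈ Λ, ∀ l' ∈ Λ, l ≤ l' → ∀ φ : ℝ → ℝ, Monotone φ →
      (∃ C, ∀ x, |φ x| ≤ C) → ∫ x, φ x ∂(μ l) ≤ ∫ x, φ x ∂(μ l'))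
    (ψ : (Fin n → ℝ) → ℝ) (hψmeas : Measurable ψ) (C : ℝ) (hψbdd : ∀ x, |ψ x| ≤ C)
    (hψsm : ∀ x y : Fin n → ℝ, ψ x + ψ y ≤ ψ (x ⊔ y) + ψ (x ⊓ y))
    (a b : Fin n → ℝ) (ha : ∀ i, a i ∈ Λ) (hb : ∀ i, b i ∈ Λ) (hab : a ≤ b)
    (i : Fin n) (s t : ℝ) (hs : s ∈ Λ) (ht : t ∈ Λ) (hstle : s ≤ t) :
    (∫ x, ψ x ∂(Measure.pi fun j => μ (Function.update b i s j)))
      + (∫ x, ψ x ∂(Measure.pi fun j => μ (Function.update a i t j)))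
    ≤ (∫ x, ψ x ∂(Measure.pi fun j => μ (Function.update b i t j)))
      + (∫ x, ψ x ∂(Measure.pi fun j => μ (Function.update a i s j))) := by
  rcases n with _ | k
  · exact i.elim0
  set e := MeasurableEquiv.piFinSuccAbove (fun _ : Fin (k + 1) => ℝ) i with he
  have hesymm : ∀ (p : ℝ × (Fin k → ℝ)), e.symm p = i.insertNth p.1 p.2 := by
    intro p
    simp [he, MeasurableEquiv.piFinSuccAbove_symm_apply, Fin.insertNthEquiv]
  haveI : ∀ j, IsProbabilityMeasure (μ (a (i.succAbove j))) := fun j => hprob _ (ha _)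
  haveI : ∀ j, IsProbabilityMeasure (μ (b (i.succAbove j))) := fun j => hprob _ (hb _)
  haveI : IsProbabilityMeasure (μ s) := hprob _ hs
  haveI : IsProbabilityMeasure (μ t) := hprob _ ht
  set πa := Measure.pi (fun j => μ (a (i.succAbove j))) with hπa
  set πb := Measure.pi (fun j => μ (b (i.succAbove j))) with hπb
  haveI : IsProbabilityMeasure πa := by rw [hπa]; infer_instance
  haveI : IsProbabilityMeasure πb := by rw [hπb]; infer_instance
  have hmf : Measurable fun p : ℝ × (Fin k → ℝ) => ψ (e.symm p) :=
    hψmeas.comp e.symm.measurable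
  have hbf : ∀ p : ℝ × (Fin k → ℝ), |ψ (e.symm p)| ≤ C := fun p => hψbdd _
  have hmins : ∀ y : ℝ, Measurable fun z : Fin k → ℝ => ψ (e.symm (y, z)) :=
    fun y => hmf.comp measurable_prodMk_left
  -- key decomposition
  have key : ∀ (c : Fin (k+1) → ℝ), (∀ j, c j ∈ Λ) → ∀ r, r ∈ Λ →
      (∫ x, ψ x ∂(Measure.pi fun j => μ (Function.update c i r j)))
        = ∫ y, (∫ z, ψ (e.symm (y, z))
            ∂(Measure.pi fun j => μ (c (i.succAbove j)))) ∂(μ r) := by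
    intro c hc r hr
    haveI : IsProbabilityMeasure (μ r) := hprob _ hr
    haveI : ∀ j, IsProbabilityMeasure (μ (Function.update c i r j)) := by
      intro j
      rcases eq_or_ne j i with rfl | hj
      · simpa using hprob _ hr
      · rw [Function.update_of_ne hj]; exact hprob _ (hc _)
    haveI : ∀ j, IsProbabilityMeasure (μ (c (i.succAbove j))) := fun j => hprob _ (hc _)
    have hmp := measurePreserving_piFinSuccAbove (fun j => μ (Function.update c i r j)) i
    have hrest : (fun j => μ (Function.update c i r (i.succAbove j)))
        = fun j => μ (c (i.succAbove j)) := by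
      funext j
      rw [Function.update_of_ne (Fin.succAbove_ne i j)]
    rw [Function.update_self] at hmp
    rw [hrest] at hmp
    have h1 : (∫ x, ψ x ∂(Measure.pi fun j => μ (Function.update c i r j)))
        = ∫ p, ψ (e.symm p)
            ∂((μ r).prod (Measure.pi fun j => μ (c (i.succAbove j)))) :=
      ((hmp.symm e).integral_comp e.symm.measurableEmbedding ψ).symm
    rw [h1, MeasureTheory.integral_prod]
    exact bdd_integrable hmf.aestronglyMeasurable hbf
  set Φa : ℝ → ℝ := fun y => ∫ z, ψ (e.symm (y, z)) ∂πa with hΦa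
  set Φb : ℝ → ℝ := fun y => ∫ z, ψ (e.symm (y, z)) ∂πb with hΦb
  rw [key b hb s hs, key b hb t ht, key a ha s hs, key a ha t ht]
  have hΦabdd : ∀ y, |Φa y| ≤ C := fun y => bdd_integral_abs fun z => hψbdd _
  have hΦbbdd : ∀ y, |Φb y| ≤ C := fun y => bdd_integral_abs fun z => hψbdd _
  have hΦameas : ∀ (P : Measure ℝ), AEStronglyMeasurable Φa P := fun P =>
    (hmf.stronglyMeasurable.integral_prod_right' (ν := πa)).aestronglyMeasurable
  have hΦbmeas : ∀ (P : Measure ℝ), AEStronglyMeasurable Φb P := fun P =>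
    (hmf.stronglyMeasurable.integral_prod_right' (ν := πb)).aestronglyMeasurable
  -- monotonicity of Φb - Φa
  have hmono : Monotone (fun y => Φb y - Φa y) := by
    intro y y' hyy
    show Φb y - Φa y ≤ Φb y' - Φa y'
    -- the increment function
    set h : (Fin k → ℝ) → ℝ := fun z => ψ (e.symm (y', z)) - ψ (e.symm (y, z)) with hh
    have hhm : Measurable h := (hmins y').sub (hmins y)
    have hhb : ∀ z, |h z| ≤ C + C := fun z =>
      (abs_sub _ _).trans (add_le_add (hψbdd _) (hψbdd _))
    have hhmono : Monotone h := by
      intro z z' hzz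
      have hsup : (i.insertNth y' z : Fin (k+1) → ℝ) ⊔ i.insertNth y z' = i.insertNth y' z' := by
        have h := Fin.insertNth_binop (fun _ : Fin (k+1) => ((· ⊔ ·) : ℝ → ℝ → ℝ)) i y' y z z'
        have h2 : (fun j => z j ⊔ z' j) = z' := funext fun j => sup_eq_right.2 (hzz j)
        rw [sup_eq_left.2 hyy, h2] at h
        exact h.symm
      have hinf : (i.insertNth y' z : Fin (k+1) → ℝ) ⊓ i.insertNth y z' = i.insertNth y z := by
        have h := Fin.insertNth_binop (fun _ : Fin (k+1) => ((· ⊓ ·) : ℝ → ℝ → ℝ)) i y' y z z'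
        have h2 : (fun j => z j ⊓ z' j) = z := funext fun j => inf_eq_left.2 (hzz j)
        rw [inf_eq_right.2 hyy, h2] at h
        exact h.symm
      have := hψsm (i.insertNth y' z) (i.insertNth y z')
      rw [hsup, hinf] at this
      simp only [hh, hesymm]
      linarith
    have hπle : ∫ z, h z ∂πa ≤ ∫ z, h z ∂πb := by
      refine pi_st k _ _ (fun j => hprob _ (ha _)) (fun j => hprob _ (hb _))
        (fun j φ hφ hbφ => hsi _ (ha _) _ (hb _) (hab _) φ hφ hbφ) h (C + C) hhm hhb hhmono
    have hia : ∫ z, h z ∂πa = Φa y' - Φa y := by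
      rw [hh]
      rw [integral_sub (bdd_integrable (hmins y').aestronglyMeasurable fun z => hψbdd _)
        (bdd_integrable (hmins y).aestronglyMeasurable fun z => hψbdd _)]
    have hib : ∫ z, h z ∂πb = Φb y' - Φb y := by
      rw [hh]
      rw [integral_sub (bdd_integrable (hmins y').aestronglyMeasurable fun z => hψbdd _)
        (bdd_integrable (hmins y).aestronglyMeasurable fun z => hψbdd _)]
    rw [hia, hib] at hπle
    linarith
  have hdiff := hsi s hs t ht hstle (fun y => Φb y - Φa y) hmono
    ⟨C + C, fun y => (abs_sub _ _).trans (add_le_add (hΦbbdd y) (hΦabdd y))⟩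
  rw [integral_sub (bdd_integrable (hΦbmeas _) hΦbbdd) (bdd_integrable (hΦameas _) hΦabdd),
    integral_sub (bdd_integrable (hΦbmeas _) hΦbbdd) (bdd_integrable (hΦameas _) hΦabdd)]
    at hdiff
  linarith

private lemma telescope {n : ℕ} (Λ : Set ℝ) (μ : ℝ → Measure ℝ)
    (hprob : ∀ l ∈ Λ, IsProbabilityMeasure (μ l))
    (hsi : ∀ l ∈ Λ, ∀ l' ∈ Λ, l ≤ l' → ∀ φ : ℝ → ℝ, Monotone φ →
      (∃ C, ∀ x, |φ x| ≤ C) → ∫ x, φ x ∂(μ l) ≤ ∫ x, φ x ∂(μ l'))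
    (ψ : (Fin n → ℝ) → ℝ) (hψmeas : Measurable ψ) (C : ℝ) (hψbdd : ∀ x, |ψ x| ≤ C)
    (hψsm : ∀ x y : Fin n → ℝ, ψ x + ψ y ≤ ψ (x ⊔ y) + ψ (x ⊓ y))
    (c : Fin n → ℝ) (hc : ∀ i, c i ∈ Λ) :
    ∀ (S : Finset (Fin n)) (a b : Fin n → ℝ), (∀ i, a i ∈ Λ) → (∀ i, b i ∈ Λ) →
      a ≤ b → (∀ i ∈ S, a i = b i ∧ b i ≤ c i) →
      (∫ x, ψ x ∂(Measure.pi fun j => μ (b j)))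
          + (∫ x, ψ x ∂(Measure.pi fun j => μ (S.piecewise c a j)))
        ≤ (∫ x, ψ x ∂(Measure.pi fun j => μ (S.piecewise c b j)))
          + (∫ x, ψ x ∂(Measure.pi fun j => μ (a j))) := by
  intro S
  induction S using Finset.induction_on with
  | empty => intro a b _ _ _ _; simp
  | @insert i S hiS ih =>
      intro a b ha hb hab hmem
      obtain ⟨hai, hbi⟩ := hmem i (Finset.mem_insert_self i S)
      set a' := Function.update a i (c i) with ha'
      set b' := Function.update b i (c i) with hb'
      have ha'Λ : ∀ j, a' j ∈ Λ := by
        intro j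
        rcases eq_or_ne j i with rfl | hj
        · simpa [ha'] using hc j
        · simpa [ha', Function.update_of_ne hj] using ha j
      have hb'Λ : ∀ j, b' j ∈ Λ := by
        intro j
        rcases eq_or_ne j i with rfl | hj
        · simpa [hb'] using hc j
        · simpa [hb', Function.update_of_ne hj] using hb j
      have ha'b' : a' ≤ b' := by
        intro j
        rcases eq_or_ne j i with rfl | hj
        · simp [ha', hb']
        · simpa [ha', hb', Function.update_of_ne hj] using hab j
      -- swap_step at i with s = b i, t = c i
      have hstep := swap_step Λ μ hprob hsi ψ hψmeas C hψbdd hψsm a b ha hb hab i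
        (b i) (c i) (hb i) (hc i) hbi
      rw [Function.update_eq_self i b] at hstep
      rw [← hai, Function.update_eq_self i a] at hstep
      -- hstep : g b + g a' ≤ g b' + g a
      have hIH := ih a' b' ha'Λ hb'Λ ha'b' (fun j hj => by
        have hji : j ≠ i := fun h => hiS (h ▸ hj)
        obtain ⟨h1, h2⟩ := hmem j (Finset.mem_insert_of_mem hj)
        exact ⟨by simp [ha', hb', Function.update_of_ne hji, h1],
          by simpa [hb', Function.update_of_ne hji] using h2⟩)
      -- piecewise identities
      have hpa : S.piecewise c a' = (insert i S).piecewise c a := by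
        funext j
        rcases eq_or_ne j i with rfl | hj
        · simp [Finset.piecewise_eq_of_notMem _ _ _ hiS, ha',
            Finset.piecewise_eq_of_mem _ _ _ (Finset.mem_insert_self j S)]
        · by_cases hjS : j ∈ S
          · simp [Finset.piecewise_eq_of_mem _ _ _ hjS,
              Finset.piecewise_eq_of_mem _ _ _ (Finset.mem_insert_of_mem hjS)]
          · have : j ∉ insert i S := by simp [hj, hjS]
            simp [Finset.piecewise_eq_of_notMem _ _ _ hjS,
              Finset.piecewise_eq_of_notMem _ _ _ this, ha', Function.update_of_ne hj]
      have hpb : S.piecewise c b' = (insert i S).piecewise c b := by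
        funext j
        rcases eq_or_ne j i with rfl | hj
        · simp [Finset.piecewise_eq_of_notMem _ _ _ hiS, hb',
            Finset.piecewise_eq_of_mem _ _ _ (Finset.mem_insert_self j S)]
        · by_cases hjS : j ∈ S
          · simp [Finset.piecewise_eq_of_mem _ _ _ hjS,
              Finset.piecewise_eq_of_mem _ _ _ (Finset.mem_insert_of_mem hjS)]
          · have : j ∉ insert i S := by simp [hj, hjS]
            simp [Finset.piecewise_eq_of_notMem _ _ _ hjS,
              Finset.piecewise_eq_of_notMem _ _ _ this, hb', Function.update_of_ne hj]
      rw [hpa, hpb] at hIH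
      linarith

/-- If `(μ_λ)_{λ∈Λ}` is a family of probability measures on `ℝ` that is
stochastically increasing in `λ`, and `ψ : ℝ^n → ℝ` is bounded, measurable and
supermodular, then `g(λ₁,…,λₙ) = ∫ ψ d(μ_{λ₁} ⊗ ⋯ ⊗ μ_{λₙ})` is supermodular
on `Λ^n`. -/
theorem integral_supermodular_of_stochastically_increasing (n : ℕ) (Λ : Set ℝ)
    (μ : ℝ → Measure ℝ) (hprob : ∀ l ∈ Λ, IsProbabilityMeasure (μ l))
    (hsi : ∀ l ∈ Λ, ∀ l' ∈ Λ, l ≤ l' → ∀ φ : ℝ → ℝ, Monotone φ →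
      (∃ C, ∀ x, |φ x| ≤ C) → ∫ x, φ x ∂(μ l) ≤ ∫ x, φ x ∂(μ l'))
    (ψ : (Fin n → ℝ) → ℝ) (hψmeas : Measurable ψ) (hψbdd : ∃ C, ∀ x, |ψ x| ≤ C)
    (hψsm : ∀ x y : Fin n → ℝ, ψ x + ψ y ≤ ψ (x ⊔ y) + ψ (x ⊓ y)) :
    ∀ l l' : Fin n → ℝ, (∀ i, l i ∈ Λ) → (∀ i, l' i ∈ Λ) →
      (∫ x, ψ x ∂(Measure.pi fun i => μ (l i)))
          + (∫ x, ψ x ∂(Measure.pi fun i => μ (l' i)))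
        ≤ (∫ x, ψ x ∂(Measure.pi fun i => μ ((l ⊔ l') i)))
          + (∫ x, ψ x ∂(Measure.pi fun i => μ ((l ⊓ l') i))) := by
  intro l l' hl hl'
  obtain ⟨C, hC⟩ := hψbdd
  set S : Finset (Fin n) := Finset.univ.filter (fun i => l i < l' i) with hS
  have hcΛ : ∀ i, (l ⊔ l') i ∈ Λ := by
    intro i
    rcases le_total (l i) (l' i) with h | h
    · simpa [Pi.sup_apply, sup_eq_right.2 h] using hl' i
    · simpa [Pi.sup_apply, sup_eq_left.2 h] using hl i
  have haΛ : ∀ i, (l ⊓ l') i ∈ Λ := by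
    intro i
    rcases le_total (l i) (l' i) with h | h
    · simpa [Pi.inf_apply, inf_eq_left.2 h] using hl i
    · simpa [Pi.inf_apply, inf_eq_right.2 h] using hl' i
  have key := telescope Λ μ hprob hsi ψ hψmeas C hC hψsm (l ⊔ l') hcΛ S (l ⊓ l') l
    haΛ hl (fun i => inf_le_left) (fun i hi => by
      rw [hS, Finset.mem_filter] at hi
      exact ⟨inf_eq_left.2 hi.2.le, le_sup_left⟩)
  have hpb : S.piecewise (l ⊔ l') l = l ⊔ l' := by
    funext j
    by_cases hj : j ∈ S
    · simp [Finset.piecewise_eq_of_mem _ _ _ hj]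
    · have hle : l' j ≤ l j := by
        by_contra hcon
        exact hj (by rw [hS]; simp [lt_of_not_ge hcon])
      rw [Finset.piecewise_eq_of_notMem _ _ _ hj]
      simp [Pi.sup_apply, sup_eq_left.2 hle]
  have hpa : S.piecewise (l ⊔ l') (l ⊓ l') = l' := by
    funext j
    by_cases hj : j ∈ S
    · have hlt : l j < l' j := by rw [hS] at hj; simpa using hj
      rw [Finset.piecewise_eq_of_mem _ _ _ hj]
      simp [Pi.sup_apply, sup_eq_right.2 hlt.le]
    · have hle : l' j ≤ l j := by
        by_contra hcon
        exact hj (by rw [hS]; simp [lt_of_not_ge hcon])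
      rw [Finset.piecewise_eq_of_notMem _ _ _ hj]
      simp [Pi.inf_apply, inf_eq_right.2 hle]
  rw [hpa, hpb] at key
  linarith
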